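/- Let Q be a finite (left) quasifield with q elements and let A ⊆ Q\{0} be a nonempty subset. If m = |A+A| and n = |A·A|, then |A|² ≤ m·n·|A|/q + q^{1/2}·√(m·n). -/

import Mathlib

/-- A finite (left) quasifield. -/
class Quasifield (Q : Type*) extends AddCommGroup Q, Mul Q, One Q where
  one_ne_zero : (1 : Q) ≠ 0
  one_mul : ∀ a : Q, 1 * a = a
  mul_one : ∀ a : Q, a * 1 = a
  zero_mul : ∀ a : Q, 0 * a = 0
  mul_zero : ∀ a : Q, a * 0 = 0
  mul_ne_zero : ∀ a b : Q, a ≠ 0 → b ≠ 0 → a * b ≠ 0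
  existsUnique_mul_left : ∀ a b : Q, a ≠ 0 → b ≠ 0 → ∃! x : Q, a * x = b
  existsUnique_mul_right : ∀ a b : Q, a ≠ 0 → b ≠ 0 → ∃! y : Q, y * a = b
  left_distrib : ∀ a b c : Q, a * (b + c) = a * b + a * c
  existsUnique_affine : ∀ a b c : Q, a ≠ b → ∃! x : Q, a * x = b * x + c

/-- The kernel of a quasifield. -/
def Quasifield.kernel (Q : Type*) [Quasifield Q] : Set Q :=
  {k | (∀ x y : Q, (x + y) * k = x * k + y * k) ∧ ∀ x y : Q, (x * y) * k = x * (y * k)}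

open scoped Pointwise

namespace QfSP

open Finset

variable {Q : Type*} [Quasifield Q]

lemma qf_mul_neg (a b : Q) : a * (-b) = -(a * b) := by
  have h := Quasifield.left_distrib a b (-b)
  rw [add_neg_cancel, Quasifield.mul_zero] at h
  exact eq_neg_of_add_eq_zero_right h.symm

lemma qf_mul_sub (a b c : Q) : a * (b - c) = a * b - a * c := by
  rw [sub_eq_add_neg, Quasifield.left_distrib, qf_mul_neg, sub_eq_add_neg]

/-- right cancellation -/
lemma qf_right_cancel {a b c : Q} (hc : c ≠ 0) (h : a * c = b * c) : a = b := by
  by_cases ha : a = 0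
  · subst ha
    rw [Quasifield.zero_mul] at h
    by_contra hb'
    exact Quasifield.mul_ne_zero b c (fun hb0 => hb' (hb0 ▸ rfl)) hc h.symm
  · by_cases hb : b = 0
    · subst hb
      rw [Quasifield.zero_mul] at h
      exact absurd h (Quasifield.mul_ne_zero a c ha hc)
    · have hbc : b * c ≠ 0 := Quasifield.mul_ne_zero b c hb hc
      obtain ⟨y, _, hy⟩ := Quasifield.existsUnique_mul_right c (b * c) hc hbc
      exact (hy a h).trans (hy b rfl).symm

/-- left cancellation for nonzero entries -/
lemma qf_left_cancel {a b c : Q} (ha : a ≠ 0) (hb : b ≠ 0) (h : a * b = a * c) : b = c := by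
  have hab : a * b ≠ 0 := Quasifield.mul_ne_zero a b ha hb
  have hc : c ≠ 0 := by
    intro hc0; rw [hc0, Quasifield.mul_zero] at h; exact hab h
  obtain ⟨x, _, hx⟩ := Quasifield.existsUnique_mul_left a (a * b) ha hab
  exact (hx b rfl).trans (hx c h.symm).symm

variable [Fintype Q] [DecidableEq Q]

/-- every point lies on exactly `q` lines of the form `x = a·y + c` -/
lemma lines_through (p : Q × Q) :
    (Finset.univ.filter (fun s : Q × Q => p.1 = s.1 * p.2 + s.2)).card = Fintype.card Q := by
  have h : (Finset.univ.filter (fun s : Q × Q => p.1 = s.1 * p.2 + s.2)) =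
      Finset.univ.image (fun a : Q => (a, p.1 - a * p.2)) := by
    ext s
    simp only [mem_filter, mem_univ, true_and, mem_image]
    constructor
    · intro h
      exact ⟨s.1, by rw [h]; simp⟩
    · rintro ⟨a, rfl⟩
      simp
  rw [h, Finset.card_image_of_injective _ (fun a b hab => (Prod.mk.injEq _ _ _ _ ▸ hab : _ ∧ _).1),
    Finset.card_univ]

/-- two distinct points lie on at most one common line -/
lemma lines_pair {p p' : Q × Q} (hpp : p ≠ p') :
    (Finset.univ.filter (fun s : Q × Q =>
      p.1 = s.1 * p.2 + s.2 ∧ p'.1 = s.1 * p'.2 + s.2)).card ≤ 1 := by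
  rw [Finset.card_le_one]
  intro s hs s' hs'
  simp only [mem_filter, mem_univ, true_and] at hs hs'
  have key : ∀ t : Q × Q, p.1 = t.1 * p.2 + t.2 → p'.1 = t.1 * p'.2 + t.2 →
      t.1 * (p.2 - p'.2) = p.1 - p'.1 := by
    intro t h1 h2
    rw [qf_mul_sub, h1, h2]; abel
  have k1 := key s hs.1 hs.2
  have k2 := key s' hs'.1 hs'.2
  have h1 : s.1 = s'.1 := by
    by_cases hd : p.2 - p'.2 = 0
    · rw [hd, Quasifield.mul_zero] at k1
      have h2' : p.2 = p'.2 := by rwa [sub_eq_zero] at hd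
      have h1' : p.1 = p'.1 := by rw [← sub_eq_zero, ← k1]
      exact absurd (Prod.ext h1' h2') hpp
    · exact qf_right_cancel hd (k1.trans k2.symm)
  have h2 : s.2 = s'.2 := by
    have h := hs.1.symm.trans hs'.1
    rw [h1] at h
    exact add_left_cancel h
  exact Prod.ext h1 h2

/-- first moment: total incidence count between all points of `P` and all lines -/
lemma sum_N (P : Finset (Q × Q)) :
    ∑ s : Q × Q, (P.filter (fun p => p.1 = s.1 * p.2 + s.2)).card
      = Fintype.card Q * P.card := by
  simp_rw [Finset.card_filter]
  rw [Finset.sum_comm]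
  have h : ∀ p ∈ P, (∑ s : Q × Q, if p.1 = s.1 * p.2 + s.2 then 1 else 0) = Fintype.card Q := by
    intro p _
    rw [← Finset.card_filter]
    exact lines_through p
  rw [Finset.sum_congr rfl h, Finset.sum_const, smul_eq_mul, mul_comm]

/-- second moment bound -/
lemma sum_N_sq (P : Finset (Q × Q)) :
    ∑ s : Q × Q, ((P.filter (fun p => p.1 = s.1 * p.2 + s.2)).card) ^ 2
      ≤ Fintype.card Q * P.card + P.card ^ 2 := by
  have heq : ∑ s : Q × Q, ((P.filter (fun p => p.1 = s.1 * p.2 + s.2)).card) ^ 2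
      = ∑ p ∈ P, ∑ p' ∈ P, (Finset.univ.filter (fun s : Q × Q =>
          p.1 = s.1 * p.2 + s.2 ∧ p'.1 = s.1 * p'.2 + s.2)).card := by
    have hmul : ∀ (c c' : Prop) (_ : Decidable c) (_ : Decidable c'),
        (if c then (1:ℕ) else 0) * (if c' then 1 else 0) = if c ∧ c' then 1 else 0 := by
      intro c c' _ _
      by_cases hc : c <;> by_cases hc' : c' <;> simp [hc, hc']
    simp_rw [sq, Finset.card_filter, Finset.sum_mul_sum, hmul]
    rw [Finset.sum_comm]
    congr 1
    ext p
    rw [Finset.sum_comm]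
  rw [heq]
  have hinner : ∀ p ∈ P, (∑ p' ∈ P, (Finset.univ.filter (fun s : Q × Q =>
      p.1 = s.1 * p.2 + s.2 ∧ p'.1 = s.1 * p'.2 + s.2)).card)
      ≤ Fintype.card Q + P.card := by
    intro p hp
    rw [← Finset.add_sum_erase P _ hp]
    have hdiag : (Finset.univ.filter (fun s : Q × Q =>
        p.1 = s.1 * p.2 + s.2 ∧ p.1 = s.1 * p.2 + s.2)).card = Fintype.card Q := by
      simp_rw [and_self]
      exact lines_through p
    rw [hdiag]
    gcongr
    calc ∑ p' ∈ P.erase p, (Finset.univ.filter (fun s : Q × Q =>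
          p.1 = s.1 * p.2 + s.2 ∧ p'.1 = s.1 * p'.2 + s.2)).card
        ≤ ∑ _p' ∈ P.erase p, 1 := by
          apply Finset.sum_le_sum
          intro p' hp'
          exact lines_pair (Ne.symm (Finset.mem_erase.mp hp').1)
      _ ≤ P.card := by
          rw [Finset.sum_const, smul_eq_mul, mul_one]
          exact Finset.card_erase_le
  calc ∑ p ∈ P, ∑ p' ∈ P, _ ≤ ∑ _p ∈ P, (Fintype.card Q + P.card) := Finset.sum_le_sum hinner
    _ = Fintype.card Q * P.card + P.card ^ 2 := by
        rw [Finset.sum_const, smul_eq_mul]; ring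

/-- abstract deviation bound -/
lemma dev_bound {ι : Type*} [Fintype ι] (f : ι → ℕ) (q c : ℕ) (hq : 0 < q)
    (hcard : Fintype.card ι = q * q)
    (h1 : ∑ i : ι, f i = q * c) (h2 : ∑ i : ι, (f i) ^ 2 ≤ q * c + c ^ 2) :
    ∑ i : ι, ((f i : ℝ) - (c : ℝ) / q) ^ 2 ≤ (q : ℝ) * c := by
  have hqR : (0 : ℝ) < q := by exact_mod_cast hq
  have e1 : ∑ i : ι, ((f i : ℝ)) = (q : ℝ) * c := by exact_mod_cast congrArg (Nat.cast : ℕ → ℝ) h1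
  have e2 : ∑ i : ι, ((f i : ℝ)) ^ 2 ≤ (q : ℝ) * c + (c : ℝ) ^ 2 := by exact_mod_cast h2
  have expand : ∑ i : ι, ((f i : ℝ) - (c : ℝ) / q) ^ 2
      = (∑ i : ι, ((f i : ℝ)) ^ 2) - 2 * ((c : ℝ) / q) * (∑ i : ι, (f i : ℝ))
        + (Fintype.card ι : ℝ) * ((c : ℝ) / q) ^ 2 := by
    have hpt : ∀ i : ι, ((f i : ℝ) - (c : ℝ) / q) ^ 2
        = (f i : ℝ) ^ 2 - 2 * ((c : ℝ) / q) * (f i : ℝ) + ((c : ℝ) / q) ^ 2 := fun i => by ring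
    simp_rw [hpt]
    rw [Finset.sum_add_distrib, Finset.sum_sub_distrib, ← Finset.mul_sum, Finset.sum_const,
      Finset.card_univ, nsmul_eq_mul]
  rw [expand, e1, hcard]
  have : ((q * q : ℕ) : ℝ) = (q : ℝ) * q := by push_cast; ring
  rw [this]
  have hkey : (2 : ℝ) * ((c : ℝ) / q) * ((q : ℝ) * c) = 2 * c ^ 2 := by
    field_simp
  have hkey2 : (q : ℝ) * q * ((c : ℝ) / q) ^ 2 = (c : ℝ) ^ 2 := by
    field_simp
  rw [hkey, hkey2]
  linarith

end QfSP

open Finset QfSP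
/-- Sum-product estimate in a finite quasifield (Theorem 1.4):
if `A ⊆ Q \ {0}` is nonempty, `m = |A+A|` and `n = |A·A|`, then
`|A|² ≤ m n |A| / q + √q √(m n)`. -/
theorem stmt_0 {Q : Type*} [Quasifield Q] [Fintype Q] [DecidableEq Q]
    (A : Finset Q) (hA : A.Nonempty) (hA0 : ∀ a ∈ A, a ≠ 0)
    (m n : ℕ) (hm : m = (A + A).card) (hn : n = (A * A).card) :
    (A.card : ℝ) ^ 2 ≤
      (m : ℝ) * n * A.card / (Fintype.card Q) +
        Real.sqrt (Fintype.card Q) * Real.sqrt ((m : ℝ) * n) := by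
  classical
  have hq0 : 0 < Fintype.card Q := Fintype.card_pos_iff.mpr ⟨0⟩
  set q : ℕ := Fintype.card Q with hqdef
  set P : Finset (Q × Q) := (A * A) ×ˢ (A + A) with hPdef
  set N : Q × Q → ℕ := fun s => (P.filter (fun p => p.1 = s.1 * p.2 + s.2)).card with hNdef
  have hPcard : P.card = n * m := by
    rw [hPdef, Finset.card_product, ← hn, ← hm]
  have hPR : (P.card : ℝ) = (m : ℝ) * n := by
    rw [hPcard]; push_cast; ring
  have hqR : (0 : ℝ) < q := by exact_mod_cast hq0
  set μ : ℝ := (P.card : ℝ) / q with hμdef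
  -- the deviation bound
  have hdev : ∑ s : Q × Q, ((N s : ℝ) - μ) ^ 2 ≤ (q : ℝ) * P.card := by
    apply dev_bound N q P.card hq0
    · rw [Fintype.card_prod]
    · exact sum_N P
    · exact sum_N_sq P
  -- the line map
  set φ : Q × Q → Q × Q := fun x => (x.1, -(x.1 * x.2)) with hφdef
  have hφinj : ∀ x ∈ A ×ˢ A, ∀ y ∈ A ×ˢ A, φ x = φ y → x = y := by
    intro x hx y hy hxy
    rw [Finset.mem_product] at hx hy
    have hxy' : (x.1, -(x.1 * x.2)) = (y.1, -(y.1 * y.2)) := hxy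
    rw [Prod.mk.injEq] at hxy'
    obtain ⟨h1, h2⟩ := hxy'
    rw [h1, neg_inj] at h2
    have h2' : x.2 = y.2 :=
      qf_left_cancel (hA0 _ hy.1) (hA0 _ hx.2) h2
    exact Prod.ext h1 h2'
  -- each of our lines contains at least |A| points of P
  have hlow : ∀ x ∈ A ×ˢ A, (A.card : ℝ) ≤ (N (φ x) : ℝ) := by
    intro x hx
    rw [Finset.mem_product] at hx
    have hsub : A.image (fun t => (x.1 * t, t + x.2)) ⊆
        P.filter (fun p => p.1 = (φ x).1 * p.2 + (φ x).2) := by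
      intro p hp
      rw [Finset.mem_image] at hp
      obtain ⟨t, ht, rfl⟩ := hp
      rw [Finset.mem_filter]
      constructor
      · rw [hPdef, Finset.mem_product]
        exact ⟨Finset.mul_mem_mul hx.1 ht, Finset.add_mem_add ht hx.2⟩
      · show x.1 * t = x.1 * (t + x.2) + -(x.1 * x.2)
        rw [Quasifield.left_distrib, add_neg_cancel_right]
    have hinj : Set.InjOn (fun t => (x.1 * t, t + x.2)) A := by
      intro t ht t' ht' htt
      have := congrArg Prod.snd htt
      simpa using this
    have hcard : A.card ≤ N (φ x) := by
      rw [hNdef]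
      calc A.card = (A.image (fun t => (x.1 * t, t + x.2))).card :=
            (Finset.card_image_of_injOn hinj).symm
        _ ≤ _ := Finset.card_le_card hsub
    exact_mod_cast hcard
  -- Cauchy–Schwarz step
  have hAcard : (0 : ℝ) < A.card := by exact_mod_cast Finset.card_pos.mpr hA
  have hAA : ((A ×ˢ A).card : ℝ) = (A.card : ℝ) ^ 2 := by
    rw [Finset.card_product]; push_cast; ring
  have hCS : ∑ x ∈ A ×ˢ A, ((N (φ x) : ℝ) - μ)
      ≤ Real.sqrt ((A.card : ℝ) ^ 2 * ((q : ℝ) * P.card)) := by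
    have hsq : (∑ x ∈ A ×ˢ A, ((N (φ x) : ℝ) - μ)) ^ 2
        ≤ ((A ×ˢ A).card : ℝ) * ∑ x ∈ A ×ˢ A, ((N (φ x) : ℝ) - μ) ^ 2 :=
      sq_sum_le_card_mul_sum_sq
    have himg : ∑ s ∈ (A ×ˢ A).image φ, ((N s : ℝ) - μ) ^ 2
        = ∑ x ∈ A ×ˢ A, ((N (φ x) : ℝ) - μ) ^ 2 :=
      Finset.sum_image (fun x hx y hy h => hφinj x hx y hy h)
    have hle : ∑ s ∈ (A ×ˢ A).image φ, ((N s : ℝ) - μ) ^ 2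
        ≤ ∑ s : Q × Q, ((N s : ℝ) - μ) ^ 2 := by
      apply Finset.sum_le_sum_of_subset_of_nonneg (Finset.subset_univ _)
      intro s _ _
      positivity
    have hsum2 : ∑ x ∈ A ×ˢ A, ((N (φ x) : ℝ) - μ) ^ 2 ≤ (q : ℝ) * P.card := by
      rw [← himg]; exact hle.trans hdev
    calc ∑ x ∈ A ×ˢ A, ((N (φ x) : ℝ) - μ)
        ≤ |∑ x ∈ A ×ˢ A, ((N (φ x) : ℝ) - μ)| := le_abs_self _
      _ = Real.sqrt ((∑ x ∈ A ×ˢ A, ((N (φ x) : ℝ) - μ)) ^ 2) := (Real.sqrt_sq_eq_abs _).symm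
      _ ≤ Real.sqrt ((A.card : ℝ) ^ 2 * ((q : ℝ) * P.card)) := by
          apply Real.sqrt_le_sqrt
          calc (∑ x ∈ A ×ˢ A, ((N (φ x) : ℝ) - μ)) ^ 2
              ≤ ((A ×ˢ A).card : ℝ) * ∑ x ∈ A ×ˢ A, ((N (φ x) : ℝ) - μ) ^ 2 := hsq
            _ ≤ (A.card : ℝ) ^ 2 * ((q : ℝ) * P.card) := by
                rw [hAA]
                apply mul_le_mul_of_nonneg_left hsum2 (by positivity)
  -- lower bound on the incidence sum
  have hlower : (A.card : ℝ) ^ 2 * (A.card : ℝ) ≤ ∑ x ∈ A ×ˢ A, (N (φ x) : ℝ) := by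
    calc (A.card : ℝ) ^ 2 * (A.card : ℝ) = ∑ _x ∈ A ×ˢ A, (A.card : ℝ) := by
          rw [Finset.sum_const, nsmul_eq_mul, Finset.card_product]; push_cast; ring
      _ ≤ ∑ x ∈ A ×ˢ A, (N (φ x) : ℝ) := Finset.sum_le_sum hlow
  -- put things together
  have hsplit : ∑ x ∈ A ×ˢ A, (N (φ x) : ℝ)
      = (∑ x ∈ A ×ˢ A, ((N (φ x) : ℝ) - μ)) + (A.card : ℝ) ^ 2 * μ := by
    rw [Finset.sum_sub_distrib, Finset.sum_const, nsmul_eq_mul, hAA]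
    ring
  have hmain : (A.card : ℝ) ^ 2 * (A.card : ℝ)
      ≤ Real.sqrt ((A.card : ℝ) ^ 2 * ((q : ℝ) * P.card)) + (A.card : ℝ) ^ 2 * μ := by
    calc (A.card : ℝ) ^ 2 * (A.card : ℝ) ≤ ∑ x ∈ A ×ˢ A, (N (φ x) : ℝ) := hlower
      _ = (∑ x ∈ A ×ˢ A, ((N (φ x) : ℝ) - μ)) + (A.card : ℝ) ^ 2 * μ := hsplit
      _ ≤ _ := by linarith [hCS]
  -- simplify the square root
  have hsqrt : Real.sqrt ((A.card : ℝ) ^ 2 * ((q : ℝ) * P.card))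
      = (A.card : ℝ) * (Real.sqrt (q : ℝ) * Real.sqrt ((m : ℝ) * n)) := by
    rw [Real.sqrt_mul (by positivity), Real.sqrt_sq (by positivity),
      Real.sqrt_mul (by positivity), hPR]
  rw [hsqrt] at hmain
  -- divide by |A|
  have hfinal : (A.card : ℝ) ^ 2 * (A.card : ℝ)
      ≤ ((m : ℝ) * n * A.card / q + Real.sqrt (q : ℝ) * Real.sqrt ((m : ℝ) * n)) * A.card := by
    have hμval : (A.card : ℝ) ^ 2 * μ = ((m : ℝ) * n * A.card / q) * A.card := by
      rw [hμdef, hPR]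
      field_simp
    calc (A.card : ℝ) ^ 2 * (A.card : ℝ)
        ≤ (A.card : ℝ) * (Real.sqrt (q : ℝ) * Real.sqrt ((m : ℝ) * n))
          + (A.card : ℝ) ^ 2 * μ := hmain
      _ = ((m : ℝ) * n * A.card / q + Real.sqrt (q : ℝ) * Real.sqrt ((m : ℝ) * n)) * A.card := by
          rw [hμval]; ring
  have := (mul_le_mul_iff_of_pos_right hAcard).mp (by
    calc (A.card : ℝ) ^ 2 * A.card ≤ _ := hfinal)
  exact this
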